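/- Let a, b > 0 and x, y ≥ 0. Then (x^a − y^a)(x^b − y^b) ≤ (x^{(a+b)/2} − y^{(a+b)/2})² ≤ ((a+b)²/(4ab))·(x^a − y^a)(x^b − y^b). -/

import Mathlib

open MeasureTheory intervalIntegral Real Set

private lemma memL2_aux {y x c : ℝ} (hy : 0 ≤ y) (hxy : y ≤ x) (hc : 0 < c) :
    MemLp (fun u : ℝ => u ^ ((c - 1) / 2)) (ENNReal.ofReal 2)
      (volume.restrict (Ioc y x)) := by
  have h2 : (ENNReal.ofReal 2) = 2 := by norm_num
  rw [h2]
  have hm : AEStronglyMeasurable (fun u : ℝ => u ^ ((c - 1) / 2))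
      (volume.restrict (Ioc y x)) :=
    Measurable.aestronglyMeasurable (by measurability)
  rw [memLp_two_iff_integrable_sq hm]
  have hint : IntegrableOn (fun u : ℝ => u ^ (c - 1)) (Ioc y x) volume := by
    have := (intervalIntegrable_rpow' (a := y) (b := x)
      (by linarith : (-1:ℝ) < c - 1))
    exact (intervalIntegrable_iff_integrableOn_Ioc_of_le hxy).mp this
  refine hint.congr_fun ?_ measurableSet_Ioc
  intro u hu
  have hu0 : 0 ≤ u := le_trans hy hu.1.le
  show u ^ (c - 1) = (u ^ ((c - 1) / 2)) ^ 2
  rw [← Real.rpow_two, ← Real.rpow_mul hu0]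
  norm_num

private lemma cs_core {a b x y : ℝ} (ha : 0 < a) (hb : 0 < b) (hy : 0 ≤ y) (hxy : y ≤ x) :
    ((x ^ ((a + b) / 2) - y ^ ((a + b) / 2)) / ((a + b) / 2)) ^ 2
      ≤ ((x ^ a - y ^ a) / a) * ((x ^ b - y ^ b) / b) := by
  set s : ℝ := (a + b) / 2 with hs_def
  have hs : 0 < s := by positivity
  have hint : ∀ c : ℝ, 0 < c → ∫ u in y..x, u ^ (c - 1) = (x ^ c - y ^ c) / c := by
    intro c hc
    rw [integral_rpow (Or.inl (by linarith : (-1:ℝ) < c - 1))]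
    norm_num
  have hpq : Real.HolderConjugate 2 2 := Real.holderConjugate_iff.mpr ⟨one_lt_two, by norm_num⟩
  have holder := MeasureTheory.integral_mul_le_Lp_mul_Lq_of_nonneg
      (μ := volume.restrict (Ioc y x)) hpq
      (f := fun u : ℝ => u ^ ((a - 1) / 2)) (g := fun u : ℝ => u ^ ((b - 1) / 2))
      ?_ ?_ (memL2_aux hy hxy ha) (memL2_aux hy hxy hb)
  · have e1 : (∫ u in Ioc y x, u ^ ((a-1)/2) * u ^ ((b-1)/2)) = (x ^ s - y ^ s) / s := by
      rw [← hint s hs, intervalIntegral.integral_of_le hxy]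
      refine setIntegral_congr_fun measurableSet_Ioc fun u hu => ?_
      have hu0 : 0 < u := lt_of_le_of_lt hy hu.1
      rw [← Real.rpow_add hu0]
      congr 1
      rw [hs_def]; ring
    have e2 : (∫ u in Ioc y x, (u ^ ((a-1)/2)) ^ (2:ℝ)) = (x ^ a - y ^ a) / a := by
      rw [← hint a ha, intervalIntegral.integral_of_le hxy]
      refine setIntegral_congr_fun measurableSet_Ioc fun u hu => ?_
      have hu0 : 0 ≤ u := le_trans hy hu.1.le
      rw [← Real.rpow_mul hu0]
      norm_num
    have e3 : (∫ u in Ioc y x, (u ^ ((b-1)/2)) ^ (2:ℝ)) = (x ^ b - y ^ b) / b := by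
      rw [← hint b hb, intervalIntegral.integral_of_le hxy]
      refine setIntegral_congr_fun measurableSet_Ioc fun u hu => ?_
      have hu0 : 0 ≤ u := le_trans hy hu.1.le
      rw [← Real.rpow_mul hu0]
      norm_num
    rw [e1, e2, e3] at holder
    have hA : 0 ≤ (x ^ a - y ^ a) / a :=
      div_nonneg (sub_nonneg.mpr (Real.rpow_le_rpow hy hxy ha.le)) ha.le
    have hB : 0 ≤ (x ^ b - y ^ b) / b :=
      div_nonneg (sub_nonneg.mpr (Real.rpow_le_rpow hy hxy hb.le)) hb.le
    rw [← Real.sqrt_eq_rpow, ← Real.sqrt_eq_rpow, ← Real.sqrt_mul hA] at holder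
    have hS : 0 ≤ (x ^ s - y ^ s) / s :=
      div_nonneg (sub_nonneg.mpr (Real.rpow_le_rpow hy hxy hs.le)) hs.le
    calc ((x ^ s - y ^ s) / s) ^ 2
        ≤ Real.sqrt ((x ^ a - y ^ a) / a * ((x ^ b - y ^ b) / b)) ^ 2 :=
          pow_le_pow_left₀ hS holder 2
      _ = (x ^ a - y ^ a) / a * ((x ^ b - y ^ b) / b) :=
          Real.sq_sqrt (mul_nonneg hA hB)
  · filter_upwards [ae_restrict_mem measurableSet_Ioc] with u hu
    exact Real.rpow_nonneg (le_trans hy hu.1.le) _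
  · filter_upwards [ae_restrict_mem measurableSet_Ioc] with u hu
    exact Real.rpow_nonneg (le_trans hy hu.1.le) _

private lemma power_mean_main (a b : ℝ) (ha : 0 < a) (hb : 0 < b) (x y : ℝ)
    (hx : 0 ≤ x) (hy : 0 ≤ y) (hxy : y ≤ x) :
    (x ^ a - y ^ a) * (x ^ b - y ^ b) ≤ (x ^ ((a + b) / 2) - y ^ ((a + b) / 2)) ^ 2 ∧
    (x ^ ((a + b) / 2) - y ^ ((a + b) / 2)) ^ 2
      ≤ (a + b) ^ 2 / (4 * a * b) * ((x ^ a - y ^ a) * (x ^ b - y ^ b)) := by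
  constructor
  · -- AM-GM part
    have hxa : x ^ a = (x ^ (a/2)) ^ 2 := by
      rw [← Real.rpow_two, ← Real.rpow_mul hx]; ring_nf
    have hxb : x ^ b = (x ^ (b/2)) ^ 2 := by
      rw [← Real.rpow_two, ← Real.rpow_mul hx]; ring_nf
    have hya : y ^ a = (y ^ (a/2)) ^ 2 := by
      rw [← Real.rpow_two, ← Real.rpow_mul hy]; ring_nf
    have hyb : y ^ b = (y ^ (b/2)) ^ 2 := by
      rw [← Real.rpow_two, ← Real.rpow_mul hy]; ring_nf
    have hxs : x ^ ((a + b) / 2) = x ^ (a/2) * x ^ (b/2) := by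
      rw [show (a + b)/2 = a/2 + b/2 by ring, Real.rpow_add' hx (by positivity)]
    have hys : y ^ ((a + b) / 2) = y ^ (a/2) * y ^ (b/2) := by
      rw [show (a + b)/2 = a/2 + b/2 by ring, Real.rpow_add' hy (by positivity)]
    rw [hxa, hxb, hya, hyb, hxs, hys]
    nlinarith [sq_nonneg (x ^ (a/2) * y ^ (b/2) - x ^ (b/2) * y ^ (a/2))]
  · have key := cs_core ha hb hy hxy
    have hs : (0:ℝ) < (a + b) / 2 := by positivity
    rw [div_pow] at key
    rw [div_le_iff₀ (by positivity)] at key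
    rw [show (a + b) ^ 2 / (4 * a * b) * ((x ^ a - y ^ a) * (x ^ b - y ^ b))
        = (x ^ a - y ^ a) / a * ((x ^ b - y ^ b) / b) * ((a + b) / 2) ^ 2 by
      field_simp; ring]
    exact key

/-- Elementary two-sided power inequality (Lemma A.3 / lem.xy). -/
theorem power_mean_two_sided
    (a b : ℝ) (ha : 0 < a) (hb : 0 < b) (x y : ℝ) (hx : 0 ≤ x) (hy : 0 ≤ y) :
    (x ^ a - y ^ a) * (x ^ b - y ^ b) ≤ (x ^ ((a + b) / 2) - y ^ ((a + b) / 2)) ^ 2 ∧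
    (x ^ ((a + b) / 2) - y ^ ((a + b) / 2)) ^ 2
      ≤ (a + b) ^ 2 / (4 * a * b) * ((x ^ a - y ^ a) * (x ^ b - y ^ b)) := by
  rcases le_total y x with h | h
  · exact power_mean_main a b ha hb x y hx hy h
  · obtain ⟨h1, h2⟩ := power_mean_main a b ha hb y x hy hx h
    constructor
    · calc (x ^ a - y ^ a) * (x ^ b - y ^ b)
          = (y ^ a - x ^ a) * (y ^ b - x ^ b) := by ring
        _ ≤ (y ^ ((a + b) / 2) - x ^ ((a + b) / 2)) ^ 2 := h1
        _ = (x ^ ((a + b) / 2) - y ^ ((a + b) / 2)) ^ 2 := by ring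
    · calc (x ^ ((a + b) / 2) - y ^ ((a + b) / 2)) ^ 2
          = (y ^ ((a + b) / 2) - x ^ ((a + b) / 2)) ^ 2 := by ring
        _ ≤ (a + b) ^ 2 / (4 * a * b) * ((y ^ a - x ^ a) * (y ^ b - x ^ b)) := h2
        _ = (a + b) ^ 2 / (4 * a * b) * ((x ^ a - y ^ a) * (x ^ b - y ^ b)) := by ring
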